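/- arXiv:2012.14407 — 3 statements merged into one kernel-verified Lean document; each statement's English description precedes it below -/
import Mathlib

section
/- Let P be an exponentially localized orthogonal projection on L²(ℝ^d) with kernel bound |P(x,y)| ≤ C e^{−β‖x−y‖}. Assume P admits a generalized Wannier basis {w_{γ,a}}_{γ∈𝔇, 1≤a≤m(γ)} with localization function G satisfying G(‖x‖) ≤ C₁ e^{λ‖x‖} for some C₁ > 0 and λ < 2β. Then there exists a constant K > 0, independent of γ ∈ 𝔇, such that each generalized Wannier function satisfies |w_{γ,a}(x)| ≤ K G(‖x−γ‖)^{−1/2} for all x ∈ ℝ^d, all γ ∈ 𝔇 and all 1 ≤ a ≤ m(γ). -/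
open MeasureTheory Filter Topology

noncomputable section

abbrev Rd (d : ℕ) : Type := EuclideanSpace ℝ (Fin d)

abbrev Hd (d : ℕ) : Type := MeasureTheory.Lp ℂ 2 (volume : Measure (Rd d))

/-- `T` is an integral operator with kernel `k` on `L²(ℝ^d)`. -/
def HasKernelD {d : ℕ} (T : Hd d →L[ℂ] Hd d) (k : Rd d → Rd d → ℂ) : Prop :=
  ∀ f : Hd d, ∀ᵐ x : Rd d ∂volume, (T f : Rd d → ℂ) x = ∫ y : Rd d, k x y * (f : Rd d → ℂ) y

lemma exp_decay_integrable {d : ℕ} {c : ℝ} (hc : 0 < c) :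
    Integrable (fun z : Rd d => Real.exp (-c * ‖z‖)) := by
  set n : ℕ := d + 1 with hn
  have hfr : (Module.finrank ℝ (Rd d) : ℝ) < ((n : ℕ) : ℝ) := by
    simp [hn, finrank_euclideanSpace_fin]
  set Kc : ℝ := max 1 ((n : ℝ) / c) with hKc
  have hKc1 : (1 : ℝ) ≤ Kc := le_max_left _ _
  have hKc0 : (0 : ℝ) < Kc := lt_of_lt_of_le one_pos hKc1
  have key : ∀ t : ℝ, 0 ≤ t → Real.exp (-c * t) ≤ Kc ^ n * (1 + t) ^ (-((n:ℕ) : ℝ)) := by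
    intro t ht
    have h1t : (0:ℝ) < 1 + t := by linarith
    have hn0 : (0:ℝ) < (n:ℝ) := by positivity
    have hstep : 1 + t ≤ Kc * Real.exp (c * t / n) := by
      have h2 : 1 + c * t / n ≤ Real.exp (c * t / n) := by
        linarith [Real.add_one_le_exp (c * t / n)]
      have h3 : 1 + t ≤ Kc * (1 + c * t / n) := by
        have hKc2 : (n : ℝ) / c ≤ Kc := le_max_right _ _
        have h4 : t ≤ Kc * (c * t / n) := by
          calc t = ((n:ℝ)/c) * (c * t / n) := by field_simp
            _ ≤ Kc * (c * t / n) :=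
                mul_le_mul_of_nonneg_right hKc2 (by positivity)
        nlinarith
      calc 1 + t ≤ Kc * (1 + c * t / n) := h3
        _ ≤ Kc * Real.exp (c * t / n) := mul_le_mul_of_nonneg_left h2 hKc0.le
    have hpow : (1 + t) ^ n ≤ Kc ^ n * Real.exp (c * t) := by
      calc (1 + t) ^ n ≤ (Kc * Real.exp (c * t / n)) ^ n :=
            pow_le_pow_left₀ h1t.le hstep n
        _ = Kc ^ n * (Real.exp (c * t / n)) ^ n := mul_pow _ _ _
        _ = Kc ^ n * Real.exp (c * t) := by
            rw [← Real.exp_nat_mul]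
            congr 1
            field_simp
    rw [Real.rpow_neg h1t.le, Real.rpow_natCast, ← div_eq_mul_inv,
      le_div_iff₀ (by positivity : (0:ℝ) < (1 + t) ^ n)]
    rw [neg_mul, Real.exp_neg, inv_mul_le_iff₀ (Real.exp_pos _)] at *
    calc (1 + t) ^ n ≤ Kc ^ n * Real.exp (c * t) := hpow
      _ = Real.exp (c * t) * Kc ^ n := mul_comm _ _
  refine ((integrable_one_add_norm hfr).const_mul (Kc ^ n)).mono'
    ((Real.continuous_exp.comp (continuous_const.mul continuous_norm)).aestronglyMeasurable)
    (Eventually.of_forall fun z => ?_)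
  rw [Real.norm_eq_abs, abs_of_pos (Real.exp_pos _)]
  exact key ‖z‖ (norm_nonneg _)

/-- L∞ bound on generalized Wannier functions. If `P` is an exponentially
localized orthogonal projection on `L²(ℝ^d)` admitting a GWB with localization function `G`
satisfying `G(‖x‖) ≤ C₁ e^{λ‖x‖}` with `λ < 2β`, then there is `K > 0`, independent of `γ`,
with `|w_{γ,a}(x)| ≤ K G(‖x-γ‖)^{-1/2}` for the continuous representative `x ↦ ∫ p(x,y) w(y) dy`
of each generalized Wannier function. -/
theorem statement_4 (d : ℕ)
    (P : Hd d →L[ℂ] Hd d) (hPsa : IsSelfAdjoint P) (hPproj : P ∘L P = P)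
    (p : Rd d → Rd d → ℂ) (C β : ℝ)
    (hpcont : Continuous fun q : Rd d × Rd d => p q.1 q.2)
    (hC : 0 < C) (hβ : 0 < β)
    (hpbd : ∀ x y : Rd d, ‖p x y‖ ≤ C * Real.exp (-β * ‖x - y‖))
    (hker : HasKernelD P p)
    -- `G` is a localization function:
    (G : ℝ → ℝ) (hGcont : ContinuousOn G (Set.Ici 0)) (hGpos : ∀ t : ℝ, 0 ≤ t → 0 < G t)
    (hGinfty : Filter.Tendsto G Filter.atTop Filter.atTop)
    (CG : ℝ) (hCG : 0 < CG)
    (hGtri : ∀ x y z : Rd d, G ‖x - y‖ ≤ CG * G ‖x - z‖ * G ‖z - y‖)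
    -- growth bound on `G`:
    (C₁ lam : ℝ) (hC₁ : 0 < C₁) (hlam : lam < 2 * β)
    (hGexp : ∀ x : Rd d, G ‖x‖ ≤ C₁ * Real.exp (lam * ‖x‖))
    -- the generalized Wannier basis:
    (𝔇 : Set (Rd d)) (m : Rd d → ℕ) (mStar : ℕ) (hm : ∀ γ ∈ 𝔇, m γ ≤ mStar)
    (w : (γ : Rd d) → Fin (m γ) → Hd d)
    (horth : Orthonormal ℂ (fun σ : Σ γ : 𝔇, Fin (m (γ : Rd d)) => w (σ.1 : Rd d) σ.2))
    (hran : ∀ γ ∈ 𝔇, ∀ a, P (w γ a) = w γ a)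
    (hbasis : ∀ f : Hd d, P f = f →
      (∀ γ ∈ 𝔇, ∀ a, (inner ℂ (w γ a) f : ℂ) = 0) → f = 0)
    (M : ℝ)
    (hloc : ∀ γ ∈ 𝔇, ∀ a, ∫⁻ x : Rd d,
        (‖(w γ a : Rd d → ℂ) x‖₊ : ENNReal) ^ 2 * ENNReal.ofReal (G ‖x - γ‖)
        ≤ ENNReal.ofReal M) :
    ∃ K : ℝ, 0 < K ∧ ∀ γ ∈ 𝔇, ∀ a, ∀ x : Rd d,
      ‖∫ y : Rd d, p x y * (w γ a : Rd d → ℂ) y‖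
        ≤ K * (G ‖x - γ‖) ^ (-(1 : ℝ) / 2) := by
  have hc : 0 < 2 * β - lam := by linarith
  set c : ℝ := 2 * β - lam with hcdef
  have hint : Integrable (fun z : Rd d => Real.exp (-c * ‖z‖)) := exp_decay_integrable hc
  set I : ENNReal := ∫⁻ z : Rd d, ENNReal.ofReal (Real.exp (-c * ‖z‖)) with hIdef
  have hIlt : I ≠ ⊤ := hint.lintegral_lt_top.ne
  set K₁ : ℝ := C ^ 2 * CG * C₁ with hK₁
  have hK₁pos : 0 < K₁ := by positivity
  set M' : ℝ := max M 0 with hM'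
  have hM'0 : 0 ≤ M' := le_max_right _ _
  set K₀ : ℝ := (K₁ * I.toReal) ^ ((1:ℝ)/2) * M' ^ ((1:ℝ)/2) with hK₀
  have hK₀0 : 0 ≤ K₀ :=
    mul_nonneg (Real.rpow_nonneg (by positivity) _) (Real.rpow_nonneg hM'0 _)
  refine ⟨K₀ + 1, by linarith, ?_⟩
  intro γ hγ a x
  set r : ℝ := ‖x - γ‖ with hr
  have hGr : 0 < G r := hGpos r (norm_nonneg _)
  have hGy : Continuous fun y : Rd d => G ‖y - γ‖ :=
    hGcont.comp_continuous (continuous_norm.comp (continuous_id.sub continuous_const))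
      fun y => norm_nonneg _
  have hGypos : ∀ y : Rd d, 0 < G ‖y - γ‖ := fun y => hGpos _ (norm_nonneg _)
  set s : Rd d → ℝ := fun y => Real.sqrt (G ‖y - γ‖) with hs
  have hspos : ∀ y, 0 < s y := fun y => Real.sqrt_pos.mpr (hGypos y)
  have hscont : Continuous s := Real.continuous_sqrt.comp hGy
  set f : Rd d → ℂ := ((w γ a : Rd d → ℂ)) with hf
  set A : Rd d → ENNReal := fun y => ENNReal.ofReal (C * Real.exp (-β * ‖x - y‖) / s y) with hA
  set B : Rd d → ENNReal := fun y => (‖f y‖₊ : ENNReal) * ENNReal.ofReal (s y) with hB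
  have hAmeas : Measurable A := by
    apply ENNReal.measurable_ofReal.comp
    exact (Continuous.div
      (continuous_const.mul (Real.continuous_exp.comp
        (continuous_const.mul (continuous_norm.comp (continuous_const.sub continuous_id)))))
      hscont (fun y => (hspos y).ne')).measurable
  have hBmeas : AEMeasurable B volume :=
    ((Lp.aestronglyMeasurable (w γ a)).enorm).mul
      ((ENNReal.measurable_ofReal.comp hscont.measurable).aemeasurable)
  have h1 : ‖∫ y : Rd d, p x y * f y‖ ≤ (∫⁻ y : Rd d, ENNReal.ofReal ‖p x y * f y‖).toReal :=
    norm_integral_le_lintegral_norm _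
  have h2 : (∫⁻ y : Rd d, ENNReal.ofReal ‖p x y * f y‖) ≤ ∫⁻ y, A y * B y := by
    refine lintegral_mono fun y => ?_
    have hsy := hspos y
    have hle : ‖p x y * f y‖ ≤ (C * Real.exp (-β * ‖x - y‖)) * ‖f y‖ := by
      rw [norm_mul]
      refine mul_le_mul_of_nonneg_right ?_ (norm_nonneg _)
      exact hpbd x y
    calc ENNReal.ofReal ‖p x y * f y‖
        ≤ ENNReal.ofReal ((C * Real.exp (-β * ‖x - y‖)) * ‖f y‖) :=
          ENNReal.ofReal_le_ofReal hle
      _ = ENNReal.ofReal (C * Real.exp (-β * ‖x - y‖)) * (‖f y‖₊ : ENNReal) := by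
          rw [ENNReal.ofReal_mul (by positivity), ofReal_norm, enorm_eq_nnnorm]
      _ = A y * B y := by
          simp only [hA, hB]
          rw [show ENNReal.ofReal (C * Real.exp (-β * ‖x - y‖) / s y)
                * ((‖f y‖₊ : ENNReal) * ENNReal.ofReal (s y))
              = (ENNReal.ofReal (C * Real.exp (-β * ‖x - y‖) / s y) * ENNReal.ofReal (s y))
                * (‖f y‖₊ : ENNReal) from by ring,
            ← ENNReal.ofReal_mul (by positivity), div_mul_cancel₀ _ hsy.ne']
  have h3 : (∫⁻ y, A y * B y)
      ≤ (∫⁻ y, A y ^ (2:ℝ)) ^ ((1:ℝ)/2) * (∫⁻ y, B y ^ (2:ℝ)) ^ ((1:ℝ)/2) := by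
    have := ENNReal.lintegral_mul_le_Lp_mul_Lq volume (p := 2) (q := 2)
      Real.HolderConjugate.two_two hAmeas.aemeasurable hBmeas
    simpa using this
  have hY : (∫⁻ y, B y ^ (2:ℝ)) ≤ ENNReal.ofReal M' := by
    have heq : ∀ y : Rd d,
        B y ^ (2:ℝ) = (‖f y‖₊ : ENNReal) ^ 2 * ENNReal.ofReal (G ‖y - γ‖) := by
      intro y
      simp only [hB]
      rw [show ((2:ℝ)) = ((2:ℕ) : ℝ) by norm_num, ENNReal.rpow_natCast, mul_pow,
        ← ENNReal.ofReal_pow (Real.sqrt_nonneg _), Real.sq_sqrt (hGypos y).le]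
    calc (∫⁻ y, B y ^ (2:ℝ))
        = ∫⁻ y, (‖f y‖₊ : ENNReal) ^ 2 * ENNReal.ofReal (G ‖y - γ‖) := by simp_rw [heq]
      _ ≤ ENNReal.ofReal M := hloc γ hγ a
      _ ≤ ENNReal.ofReal M' := ENNReal.ofReal_le_ofReal (le_max_left _ _)
  have hX : (∫⁻ y, A y ^ (2:ℝ)) ≤ ENNReal.ofReal (K₁ / G r) * I := by
    have hpt : ∀ y : Rd d, A y ^ (2:ℝ)
        ≤ ENNReal.ofReal (K₁ / G r) * ENNReal.ofReal (Real.exp (-c * ‖x - y‖)) := by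
      intro y
      have hsy := hGypos y
      simp only [hA]
      rw [show ((2:ℝ)) = ((2:ℕ) : ℝ) by norm_num, ENNReal.rpow_natCast,
        ← ENNReal.ofReal_pow (by positivity), ← ENNReal.ofReal_mul (by positivity)]
      apply ENNReal.ofReal_le_ofReal
      have hsq : (C * Real.exp (-β * ‖x - y‖) / s y) ^ 2
          = C ^ 2 * Real.exp (-β * ‖x - y‖) ^ 2 / G ‖y - γ‖ := by
        rw [div_pow, mul_pow]
        congr 2
        simp only [hs]
        rw [Real.sq_sqrt hsy.le]
      rw [hsq, div_mul_eq_mul_div, div_le_div_iff₀ hsy hGr]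
      have hE : Real.exp (-β * ‖x - y‖) ^ 2 * Real.exp (lam * ‖x - y‖)
          = Real.exp (-c * ‖x - y‖) := by
        rw [sq, ← Real.exp_add, ← Real.exp_add]
        congr 1
        rw [hcdef]; ring
      have h5 : G r ≤ CG * (C₁ * Real.exp (lam * ‖x - y‖)) * G ‖y - γ‖ := by
        refine (hGtri x γ y).trans ?_
        exact mul_le_mul_of_nonneg_right
          (mul_le_mul_of_nonneg_left (hGexp (x - y)) hCG.le) hsy.le
      calc C ^ 2 * Real.exp (-β * ‖x - y‖) ^ 2 * G r
          ≤ C ^ 2 * Real.exp (-β * ‖x - y‖) ^ 2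
              * (CG * (C₁ * Real.exp (lam * ‖x - y‖)) * G ‖y - γ‖) :=
            mul_le_mul_of_nonneg_left h5 (by positivity)
        _ = K₁ * (Real.exp (-β * ‖x - y‖) ^ 2 * Real.exp (lam * ‖x - y‖)) * G ‖y - γ‖ := by
            rw [hK₁]; ring
        _ = K₁ * Real.exp (-c * ‖x - y‖) * G ‖y - γ‖ := by rw [hE]
    calc (∫⁻ y, A y ^ (2:ℝ))
        ≤ ∫⁻ y, ENNReal.ofReal (K₁ / G r) * ENNReal.ofReal (Real.exp (-c * ‖x - y‖)) :=
          lintegral_mono hpt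
      _ = ENNReal.ofReal (K₁ / G r)
            * ∫⁻ y, ENNReal.ofReal (Real.exp (-c * ‖x - y‖)) :=
          lintegral_const_mul' _ _ ENNReal.ofReal_ne_top
      _ = ENNReal.ofReal (K₁ / G r) * I := by
          congr 1
          have hmp : MeasurePreserving (fun y : Rd d => x - y) volume volume := by
            simp_rw [sub_eq_add_neg]
            exact (measurePreserving_add_left volume x).comp
              (Measure.measurePreserving_neg volume)
          exact hmp.lintegral_comp
            (ENNReal.measurable_ofReal.comp
              (Real.continuous_exp.comp (continuous_const.mul continuous_norm)).measurable)
  set Z : ENNReal := (ENNReal.ofReal (K₁ / G r) * I) ^ ((1:ℝ)/2)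
      * (ENNReal.ofReal M') ^ ((1:ℝ)/2) with hZ
  have hZtop : Z ≠ ⊤ := by
    apply ENNReal.mul_ne_top
    · exact ENNReal.rpow_ne_top_of_nonneg (by norm_num)
        (ENNReal.mul_ne_top ENNReal.ofReal_ne_top hIlt)
    · exact ENNReal.rpow_ne_top_of_nonneg (by norm_num) ENNReal.ofReal_ne_top
  have htot : (∫⁻ y : Rd d, ENNReal.ofReal ‖p x y * f y‖) ≤ Z :=
    h2.trans (h3.trans (mul_le_mul' (ENNReal.rpow_le_rpow hX (by norm_num))
      (ENNReal.rpow_le_rpow hY (by norm_num))))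
  have h6 : ‖∫ y : Rd d, p x y * f y‖ ≤ Z.toReal :=
    h1.trans (ENNReal.toReal_mono hZtop htot)
  have hZval : Z.toReal = K₀ * (G r) ^ (-(1:ℝ)/2) := by
    rw [hZ, ENNReal.toReal_mul, ← ENNReal.toReal_rpow, ← ENNReal.toReal_rpow,
      ENNReal.toReal_mul, ENNReal.toReal_ofReal (by positivity),
      ENNReal.toReal_ofReal hM'0]
    rw [show K₁ / G r * I.toReal = K₁ * I.toReal * (G r)⁻¹ from by ring,
      Real.mul_rpow (by positivity) (by positivity),
      Real.inv_rpow hGr.le, ← Real.rpow_neg hGr.le]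
    rw [hK₀]
    rw [show -(1:ℝ)/2 = -((1:ℝ)/2) from by norm_num]
    ring
  rw [hZval] at h6
  refine h6.trans ?_
  have : (0:ℝ) ≤ (G r) ^ (-(1:ℝ)/2) := Real.rpow_nonneg hGr.le _
  nlinarith
end
end

section
/- Let 𝔇 ⊂ ℝ² be an r-uniformly discrete set and let D : ℝ² → ℝ be a continuous function such that |D(x)| ≥ |D(y)| whenever ‖x‖ ≤ ‖y‖. Then there exists a constant K (depending on r, 𝔇 and D, but independent of L) such that for every L > 2r: ∑_{γ ∈ 𝔇 ∩ Λ_L} |D(γ)| ≤ K ∫_{Λ_L} |D(x)| dx, where Λ_L = [−L,L]². -/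
open MeasureTheory Filter Topology

noncomputable section

abbrev R2 : Type := EuclideanSpace ℝ (Fin 2)

abbrev H2 : Type := MeasureTheory.Lp ℂ 2 (volume : Measure R2)

/-- `T` is an integral operator with kernel `k`. -/
def HasKernel (T : H2 →L[ℂ] H2) (k : R2 → R2 → ℂ) : Prop :=
  ∀ f : H2, ∀ᵐ x : R2 ∂volume, (T f : R2 → ℂ) x = ∫ y : R2, k x y * (f : R2 → ℂ) y

/-- `P` is an orthogonal projection. -/
def IsOrthProj (P : H2 →L[ℂ] H2) : Prop := IsSelfAdjoint P ∧ P ∘L P = P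

/-- `p` is a jointly continuous, exponentially localized kernel with constants `C`, `β`. -/
def IsExpLocKernel (p : R2 → R2 → ℂ) (C β : ℝ) : Prop :=
  Continuous (fun q : R2 × R2 => p q.1 q.2) ∧ 0 < C ∧ 0 < β ∧
    ∀ x y : R2, ‖p x y‖ ≤ C * Real.exp (-β * ‖x - y‖)

/-- Hilbert-Schmidt operators on `L²(ℝ²)`. -/
def IsHilbertSchmidt (T : H2 →L[ℂ] H2) : Prop :=
  ∃ (w : Set H2) (b : HilbertBasis w ℂ H2), Summable fun i => ‖T (b i)‖ ^ 2

/-- Trace class operators, characterized as products of two Hilbert-Schmidt operators. -/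
def IsTraceClass (T : H2 →L[ℂ] H2) : Prop :=
  ∃ A B : H2 →L[ℂ] H2, IsHilbertSchmidt A ∧ IsHilbertSchmidt B ∧ T = A ∘L B

def traceBasisIdx : Set H2 := (exists_hilbertBasis ℂ H2).choose

def traceBasis : HilbertBasis traceBasisIdx ℂ H2 := (exists_hilbertBasis ℂ H2).choose_spec.choose

/-- The trace of an operator, computed in a fixed Hilbert basis of `L²(ℝ²)`.
For trace class operators this is the canonical trace for any choice of basis. -/
def opTrace (T : H2 →L[ℂ] H2) : ℂ :=
  ∑' i : traceBasisIdx, (inner ℂ (traceBasis i) (T (traceBasis i)) : ℂ)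

/-- The square `Λ_L = [-L, L]²` in `ℝ²`. -/
def Lam (L : ℝ) : Set R2 := {x : R2 | |x 0| ≤ L ∧ |x 1| ≤ L}

/-- The characteristic function of `Λ_L`, with values in `ℂ`. -/
def indL (L : ℝ) (x : R2) : ℂ := (Lam L).indicator (fun _ => (1 : ℂ)) x

/-- Formal composition of two integral kernels. -/
def kComp (k₁ k₂ : R2 → R2 → ℂ) : R2 → R2 → ℂ := fun x y => ∫ z : R2, k₁ x z * k₂ z y

/-- The kernel of the commutator `[X_i, P]`, when `P` has kernel `p`. -/
def commK (p : R2 → R2 → ℂ) (i : Fin 2) : R2 → R2 → ℂ :=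
  fun x y => ((x i - y i : ℝ) : ℂ) * p x y

/-- The kernel of the double commutator `[[X₁,P],[X₂,P]]`, when `P` has kernel `p`. -/
def dcommK (p : R2 → R2 → ℂ) : R2 → R2 → ℂ :=
  fun x y => kComp (commK p 0) (commK p 1) x y - kComp (commK p 1) (commK p 0) x y

/-- The kernel of `i χ_{Λ_L} P [[X₁,P],[X₂,P]] P χ_{Λ_L}`, when `P` has kernel `p`. -/
def chernK (p : R2 → R2 → ℂ) (L : ℝ) : R2 → R2 → ℂ :=
  fun x y => indL L x * (Complex.I * kComp p (kComp (dcommK p) p) x y) * indL L y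

/-- A set `𝔇 ⊆ ℝ²` is `r`-uniformly discrete. -/
def UnifDiscrete (𝔇 : Set R2) (r : ℝ) : Prop :=
  0 < r ∧ ∀ x : R2, (𝔇 ∩ Metric.ball x r).Subsingleton

/-- The index set of a generalized Wannier basis. -/
abbrev WIdx (𝔇 : Set R2) (m : R2 → ℕ) : Type := Σ γ : 𝔇, Fin (m (γ : R2))

/-- `w` is a generalized Wannier basis for `P`, `G`-localized around `𝔇`
with localization constant `M` and uniform multiplicity bound `mStar`. -/
def IsGWB (P : H2 →L[ℂ] H2) (𝔇 : Set R2) (m : R2 → ℕ) (mStar : ℕ)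
    (w : (γ : R2) → Fin (m γ) → H2) (G : ℝ → ℝ) (M : ℝ) : Prop :=
  (∀ γ ∈ 𝔇, m γ ≤ mStar) ∧
  Orthonormal ℂ (fun σ : WIdx 𝔇 m => w (σ.1 : R2) σ.2) ∧
  (∀ γ ∈ 𝔇, ∀ a, P (w γ a) = w γ a) ∧
  (∀ f : H2, P f = f → (∀ (γ : R2), γ ∈ 𝔇 → ∀ a, (inner ℂ (w γ a) f : ℂ) = 0) → f = 0) ∧
  (∀ γ ∈ 𝔇, ∀ a, ∫⁻ x : R2,
      (‖(w γ a : R2 → ℂ) x‖₊ : ENNReal) ^ 2 * ENNReal.ofReal (G ‖x - γ‖)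
      ≤ ENNReal.ofReal M)

/-- The Japanese bracket `⟨x⟩ = (1+‖x‖²)^{1/2}` on `ℝ²`. -/
def jap (x : R2) : ℝ := Real.sqrt (1 + ‖x‖ ^ 2)

/-- The Japanese bracket `⟨t⟩ = (1+t²)^{1/2}` on `ℝ`. -/
def japR (t : ℝ) : ℝ := Real.sqrt (1 + t ^ 2)


section S5Aux
open Metric

lemma s5_abs_coord_le (x : R2) (i : Fin 2) : |x i| ≤ ‖x‖ := by
  rw [EuclideanSpace.norm_eq]
  calc |x i| = Real.sqrt (‖x i‖ ^ 2) := by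
        rw [Real.sqrt_sq_eq_abs, Real.norm_eq_abs, abs_abs]
    _ ≤ _ := Real.sqrt_le_sqrt (Finset.single_le_sum
        (f := fun j => ‖x j‖ ^ 2) (fun j _ => sq_nonneg _) (Finset.mem_univ i))

lemma s5_norm_sq_eq (x : R2) : ‖x‖ ^ 2 = (x 0) ^ 2 + (x 1) ^ 2 := by
  rw [EuclideanSpace.norm_eq, Real.sq_sqrt (by positivity)]
  simp [Fin.sum_univ_two, Real.norm_eq_abs, sq_abs]

lemma s5_lam_closed (L : ℝ) : IsClosed (Lam L) := by
  have h0 : Continuous fun x : R2 => |x 0| := (PiLp.continuous_apply (p := 2) (β := fun _ : Fin 2 => ℝ) 0).abs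
  have h1 : Continuous fun x : R2 => |x 1| := (PiLp.continuous_apply (p := 2) (β := fun _ : Fin 2 => ℝ) 1).abs
  have : Lam L = (fun x : R2 => |x 0|) ⁻¹' Set.Iic L ∩ (fun x : R2 => |x 1|) ⁻¹' Set.Iic L := by
    ext x; simp [Lam]
  rw [this]
  exact (isClosed_Iic.preimage h0).inter (isClosed_Iic.preimage h1)

lemma s5_lam_measurable (L : ℝ) : MeasurableSet (Lam L) := (s5_lam_closed L).measurableSet

lemma s5_lam_compact (L : ℝ) : IsCompact (Lam L) := by
  apply Metric.isCompact_of_isClosed_isBounded (s5_lam_closed L)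
  apply Bornology.IsBounded.subset (Metric.isBounded_closedBall (x := (0:R2)) (r := 2*|L|))
  intro x hx
  simp only [Metric.mem_closedBall, dist_zero_right]
  nlinarith [s5_norm_sq_eq x, hx.1, hx.2, abs_nonneg (x 0), abs_nonneg (x 1), norm_nonneg x,
    sq_abs (x 0), sq_abs (x 1), abs_nonneg L, le_abs_self L]


end S5Aux

open Metric in
set_option maxHeartbeats 2000000 in
/-- generalized Maclaurin–Cauchy test. For an `r`-uniformly discrete set `𝔇 ⊆ ℝ²`
and a continuous, radially monotone function `D`, there is a constant `K`, independent of `L`,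
such that for all `L > 2r` the sum of `|D(γ)|` over `γ ∈ 𝔇 ∩ Λ_L` is bounded by
`K ∫_{Λ_L} |D(x)| dx`. -/
theorem statement_5
    (𝔇 : Set R2) (r : ℝ) (h𝔇 : UnifDiscrete 𝔇 r)
    (D : R2 → ℝ) (hD : Continuous D)
    (hmono : ∀ x y : R2, ‖x‖ ≤ ‖y‖ → |D y| ≤ |D x|) :
    ∃ K : ℝ, 0 < K ∧ ∀ L : ℝ, 2 * r < L →
      ∀ F : Finset R2, (↑F ⊆ 𝔇 ∩ Lam L) →
        ∑ γ ∈ F, |D γ| ≤ K * ∫ x in Lam L, |D x| := by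
  obtain ⟨hr, hdisc⟩ := h𝔇
  set s : ℝ := r / 8 with hs_def
  have hs : 0 < s := by positivity
  -- separation of points of 𝔇
  have hsep : ∀ γ ∈ 𝔇, ∀ γ' ∈ 𝔇, γ ≠ γ' → r ≤ dist γ γ' := by
    intro γ hγ γ' hγ' hne
    by_contra h
    push_neg at h
    exact hne (hdisc γ ⟨hγ, Metric.mem_ball_self hr⟩
      ⟨hγ', by simpa [Metric.mem_ball, dist_comm] using h⟩)
  -- reference volume
  have hVpos : 0 < (volume (Metric.ball (0:R2) s)).toReal :=
    ENNReal.toReal_pos (Metric.measure_ball_pos volume 0 hs).ne' measure_ball_lt_top.ne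
  set V : ℝ := (volume (Metric.ball (0:R2) s)).toReal with hV_def
  -- integrability and nonnegativity
  have hIntOn : ∀ L : ℝ, IntegrableOn (fun x => |D x|) (Lam L) volume := fun L =>
    (hD.abs.continuousOn).integrableOn_compact (s5_lam_compact L)
  have hInonneg : ∀ L : ℝ, 0 ≤ ∫ x in Lam L, |D x| := fun L =>
    setIntegral_nonneg (s5_lam_measurable L) (fun x _ => abs_nonneg _)
  -- exceptional constant for points near the origin
  have hexc : ∃ K₀ : ℝ, 0 < K₀ ∧ ∀ L : ℝ, 2 * r < L → ∀ γ ∈ 𝔇, ‖γ‖ < 3 * s →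
      |D γ| ≤ K₀ * ∫ x in Lam L, |D x| := by
    rcases (hdisc 0).eq_empty_or_singleton with hemp | ⟨γ₀, hsing⟩
    · refine ⟨1, one_pos, fun L hL γ hγ hγn => ?_⟩
      exfalso
      have : γ ∈ 𝔇 ∩ Metric.ball (0:R2) r :=
        ⟨hγ, by rw [Metric.mem_ball, dist_zero_right]; linarith⟩
      rw [hemp] at this
      exact this
    · have hmem_eq : ∀ γ ∈ 𝔇, ‖γ‖ < 3 * s → γ = γ₀ := by
        intro γ hγ hγn
        have : γ ∈ 𝔇 ∩ Metric.ball (0:R2) r :=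
          ⟨hγ, by rw [Metric.mem_ball, dist_zero_right]; linarith⟩
        rw [hsing] at this
        exact this
      by_cases hD0 : D γ₀ = 0
      · refine ⟨1, one_pos, fun L hL γ hγ hγn => ?_⟩
        rw [hmem_eq γ hγ hγn, hD0, abs_zero, one_mul]
        exact hInonneg L
      · have hε : 0 < |D γ₀| := abs_pos.mpr hD0
        have hopen : IsOpen {x : R2 | |D γ₀| / 2 < |D x|} :=
          isOpen_lt continuous_const hD.abs
        have hγ₀mem : γ₀ ∈ {x : R2 | |D γ₀| / 2 < |D x|} := by
          show |D γ₀| / 2 < |D γ₀|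
          linarith
        obtain ⟨δ, hδpos, hδball⟩ := Metric.isOpen_iff.mp hopen γ₀ hγ₀mem
        set δ' : ℝ := min δ s with hδ'_def
        have hδ' : 0 < δ' := lt_min hδpos hs
        have hVδ : 0 < (volume (Metric.ball γ₀ δ')).toReal :=
          ENNReal.toReal_pos (Metric.measure_ball_pos volume γ₀ hδ').ne'
            measure_ball_lt_top.ne
        -- does γ₀ itself satisfy ‖γ₀‖ < 3s? only used when needed; derive from hypothesis
        refine ⟨2 / (volume (Metric.ball γ₀ δ')).toReal, by positivity, fun L hL γ hγ hγn => ?_⟩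
        have hγeq := hmem_eq γ hγ hγn
        subst hγeq
        have hballsub : Metric.ball γ δ' ⊆ Lam L := by
          intro x hx
          have hd : ‖x - γ‖ < δ' := by
            rw [← dist_eq_norm]; exact Metric.mem_ball.mp hx
          have hxn : ‖x‖ < 4 * s := by
            have : ‖x‖ ≤ ‖x - γ‖ + ‖γ‖ := by
              simpa using norm_add_le (x - γ) γ
            have hδs : δ' ≤ s := min_le_right δ s
            linarith
          constructor <;>
            [ have := s5_abs_coord_le x 0; have := s5_abs_coord_le x 1 ] <;>
            linarith
        have hge : ∀ x ∈ Metric.ball γ δ', |D γ| / 2 ≤ |D x| := fun x hx =>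
          le_of_lt (hδball (Metric.ball_subset_ball (min_le_left δ s) hx))
        have hkey : |D γ| / 2 * (volume (Metric.ball γ δ')).toReal
            ≤ ∫ x in Metric.ball γ δ', |D x| :=
          setIntegral_ge_of_const_le_real measurableSet_ball measure_ball_lt_top.ne hge
            ((hIntOn L).mono_set hballsub)
        have hmonoI : ∫ x in Metric.ball γ δ', |D x| ≤ ∫ x in Lam L, |D x| :=
          setIntegral_mono_set (hIntOn L)
            (Filter.Eventually.of_forall fun x => abs_nonneg (D x))
            (hballsub.eventuallyLE)
        rw [div_mul_eq_mul_div, le_div_iff₀ hVδ]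
        calc |D γ| * (volume (Metric.ball γ δ')).toReal
            = 2 * (|D γ| / 2 * (volume (Metric.ball γ δ')).toReal) := by ring
          _ ≤ 2 * ∫ x in Lam L, |D x| := by
              have := hkey.trans hmonoI
              linarith
  obtain ⟨K₀, hK₀pos, hK₀⟩ := hexc
  refine ⟨1 / V + K₀, by positivity, fun L hL F hF => ?_⟩
  have hL0 : 0 < L := by linarith
  set I : ℝ := ∫ x in Lam L, |D x| with hI_def
  set c : R2 → R2 := fun γ => (1 - 3 * s / ‖γ‖) • γ with hc_def
  -- per-point facts for "good" points
  have hfacts : ∀ γ, γ ∈ 𝔇 → γ ∈ Lam L → 3 * s ≤ ‖γ‖ →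
      (Metric.ball (c γ) s ⊆ Metric.ball γ (r / 2)) ∧ (Metric.ball (c γ) s ⊆ Lam L) ∧
      (|D γ| * V ≤ ∫ x in Metric.ball (c γ) s, |D x|) := by
    intro γ hγ𝔇 hγL hγn
    have hγpos : 0 < ‖γ‖ := lt_of_lt_of_le (by positivity) hγn
    have ha : 0 ≤ 1 - 3 * s / ‖γ‖ := by
      rw [sub_nonneg, div_le_one hγpos]; exact hγn
    have hdistc : dist (c γ) γ = 3 * s := by
      rw [dist_eq_norm]
      have hcc : c γ - γ = (-(3 * s / ‖γ‖)) • γ := by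
        simp only [hc_def]
        module
      rw [hcc, norm_smul, Real.norm_eq_abs, abs_neg, abs_of_nonneg (by positivity)]
      field_simp
    have hnormc : ‖c γ‖ = ‖γ‖ - 3 * s := by
      simp only [hc_def, norm_smul, Real.norm_eq_abs, abs_of_nonneg ha]
      field_simp
    have hsub1 : Metric.ball (c γ) s ⊆ Metric.ball γ (r / 2) := by
      intro x hx
      rw [Metric.mem_ball] at hx ⊢
      calc dist x γ ≤ dist x (c γ) + dist (c γ) γ := dist_triangle _ _ _
        _ < s + 3 * s := by rw [hdistc]; linarith
        _ = r / 2 := by rw [hs_def]; ring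
    have hnorm_le : ∀ x ∈ Metric.ball (c γ) s, ‖x‖ ≤ ‖γ‖ := by
      intro x hx
      have hd : ‖x - c γ‖ < s := by
        rw [← dist_eq_norm]; exact Metric.mem_ball.mp hx
      have : ‖x‖ ≤ ‖x - c γ‖ + ‖c γ‖ := by simpa using norm_add_le (x - c γ) (c γ)
      rw [hnormc] at this
      linarith
    have hγiL : ∀ i : Fin 2, |γ i| ≤ L := by
      intro i; fin_cases i
      exacts [hγL.1, hγL.2]
    have hcoord : ∀ i : Fin 2, |c γ i| ≤ L - s := by
      intro i
      have hci : c γ i = (1 - 3 * s / ‖γ‖) * γ i := rfl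
      rw [hci, abs_mul, abs_of_nonneg ha]
      have hone : 1 - 3 * s / ‖γ‖ ≤ 1 := by
        have : 0 ≤ 3 * s / ‖γ‖ := by positivity
        linarith
      by_cases hcase : |γ i| ≤ L - s
      · exact le_trans (mul_le_of_le_one_left (abs_nonneg (γ i)) hone) hcase
      · push_neg at hcase
        have h16 : 16 * s ≤ L := by rw [hs_def] at hs ⊢; linarith
        have h16L : 16 * s * L ≤ L * L :=
          mul_le_mul_of_nonneg_right h16 (by linarith)
        have hLspos : 0 ≤ L - s := by linarith
        have hLs : 2 * L ^ 2 ≤ 9 * (L - s) ^ 2 := by nlinarith [sq_nonneg s]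
        have hγL2 : ‖γ‖ ^ 2 ≤ 2 * L ^ 2 := by
          nlinarith [s5_norm_sq_eq γ, hγiL 0, hγiL 1, sq_abs (γ 0), sq_abs (γ 1),
            abs_nonneg (γ 0), abs_nonneg (γ 1)]
        have hmm : (L - s) * (L - s) ≤ |γ i| * |γ i| :=
          mul_self_le_mul_self hLspos hcase.le
        have h9 : ‖γ‖ ^ 2 ≤ (3 * |γ i|) ^ 2 := by nlinarith
        have hkey : ‖γ‖ ≤ 3 * |γ i| := by
          have h3a : (0:ℝ) ≤ 3 * |γ i| := by positivity
          nlinarith [norm_nonneg γ]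
        have h3s : s ≤ 3 * s / ‖γ‖ * |γ i| := by
          rw [div_mul_eq_mul_div, le_div_iff₀ hγpos]
          nlinarith [mul_le_mul_of_nonneg_left hkey hs.le]
        have hexp : (1 - 3 * s / ‖γ‖) * |γ i| = |γ i| - 3 * s / ‖γ‖ * |γ i| := by ring
        rw [hexp]
        linarith [hγiL i]
    have hsub2 : Metric.ball (c γ) s ⊆ Lam L := by
      intro x hx
      have hd : ‖x - c γ‖ < s := by
        rw [← dist_eq_norm]; exact Metric.mem_ball.mp hx
      have hcomp : ∀ i : Fin 2, |x i| ≤ L := by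
        intro i
        have h1 : |x i - c γ i| ≤ ‖x - c γ‖ := by
          have := s5_abs_coord_le (x - c γ) i
          simpa using this
        have := hcoord i
        have : |x i| ≤ |x i - c γ i| + |c γ i| := by
          calc |x i| = |(x i - c γ i) + c γ i| := by ring_nf
            _ ≤ _ := abs_add_le _ _
        linarith [hcoord i, s5_abs_coord_le (x - c γ) i, h1]
      exact ⟨hcomp 0, hcomp 1⟩
    refine ⟨hsub1, hsub2, ?_⟩
    have hVb : volume (Metric.ball (c γ) s) = volume (Metric.ball (0:R2) s) :=
      Measure.addHaar_ball_center volume (c γ) s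
    have := setIntegral_ge_of_const_le_real (measurableSet_ball) (measure_ball_lt_top.ne)
      (fun x hx => hmono x γ (hnorm_le x hx)) ((hIntOn L).mono_set hsub2)
    rwa [measureReal_def, hVb] at this
  -- split F into "good" and "exceptional" parts
  set Fg : Finset R2 := F.filter (fun γ => 3 * s ≤ ‖γ‖) with hFg_def
  set Fe : Finset R2 := F.filter (fun γ => ¬ 3 * s ≤ ‖γ‖) with hFe_def
  have hFmem : ∀ γ ∈ F, γ ∈ 𝔇 ∧ γ ∈ Lam L := fun γ hγ => hF (Finset.mem_coe.mpr hγ)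
  have hgood : ∑ γ ∈ Fg, |D γ| ≤ 1 / V * I := by
    have hmemg : ∀ γ ∈ Fg, γ ∈ 𝔇 ∧ γ ∈ Lam L ∧ 3 * s ≤ ‖γ‖ := by
      intro γ hγ
      obtain ⟨h1, h2⟩ := Finset.mem_filter.mp hγ
      exact ⟨(hFmem γ h1).1, (hFmem γ h1).2, h2⟩
    have hdisj : Set.Pairwise ↑Fg (Function.onFun Disjoint fun γ => Metric.ball (c γ) s) := by
      intro γ hγ γ' hγ' hne
      obtain ⟨h𝔇γ, hLγ, hnγ⟩ := hmemg γ (Finset.mem_coe.mp hγ)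
      obtain ⟨h𝔇γ', hLγ', hnγ'⟩ := hmemg γ' (Finset.mem_coe.mp hγ')
      have hdd : r / 2 + r / 2 ≤ dist γ γ' := by
        have := hsep γ h𝔇γ γ' h𝔇γ' hne
        linarith
      exact Disjoint.mono (hfacts γ h𝔇γ hLγ hnγ).1 (hfacts γ' h𝔇γ' hLγ' hnγ').1
        (Metric.ball_disjoint_ball hdd)
    have hsum1 : ∑ γ ∈ Fg, |D γ| * V ≤ ∑ γ ∈ Fg, ∫ x in Metric.ball (c γ) s, |D x| :=
      Finset.sum_le_sum fun γ hγ => by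
        obtain ⟨h1, h2, h3⟩ := hmemg γ hγ
        exact (hfacts γ h1 h2 h3).2.2
    have hsum2 : ∑ γ ∈ Fg, ∫ x in Metric.ball (c γ) s, |D x|
        = ∫ x in ⋃ γ ∈ Fg, Metric.ball (c γ) s, |D x| := by
      refine (integral_biUnion_finset Fg (fun i _ => measurableSet_ball) hdisj
        (fun i hi => ?_)).symm
      obtain ⟨h1, h2, h3⟩ := hmemg i hi
      exact (hIntOn L).mono_set (hfacts i h1 h2 h3).2.1
    have hsub : (⋃ γ ∈ Fg, Metric.ball (c γ) s) ⊆ Lam L := by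
      refine Set.iUnion₂_subset fun γ hγ => ?_
      obtain ⟨h1, h2, h3⟩ := hmemg γ hγ
      exact (hfacts γ h1 h2 h3).2.1
    have hsum3 : ∫ x in ⋃ γ ∈ Fg, Metric.ball (c γ) s, |D x| ≤ I :=
      setIntegral_mono_set (hIntOn L)
        (Filter.Eventually.of_forall fun x => abs_nonneg (D x)) hsub.eventuallyLE
    have hfinal : (∑ γ ∈ Fg, |D γ|) * V ≤ I := by
      rw [Finset.sum_mul]
      exact hsum1.trans (hsum2 ▸ hsum3)
    rw [one_div, inv_mul_eq_div, le_div_iff₀ hVpos]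
    exact hfinal
  have hbad : ∑ γ ∈ Fe, |D γ| ≤ K₀ * I := by
    rcases Finset.eq_empty_or_nonempty Fe with he | ⟨a, ha⟩
    · rw [he, Finset.sum_empty]
      exact mul_nonneg hK₀pos.le (hInonneg L)
    · have huniq : ∀ b ∈ Fe, b = a := by
        intro b hb
        obtain ⟨hbF, hbn⟩ := Finset.mem_filter.mp hb
        obtain ⟨haF, han⟩ := Finset.mem_filter.mp ha
        push_neg at hbn han
        refine hdisc 0 ⟨(hFmem b hbF).1, ?_⟩ ⟨(hFmem a haF).1, ?_⟩ <;>
          rw [Metric.mem_ball, dist_zero_right] <;> linarith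
      have hFe_eq : Fe = {a} := Finset.eq_singleton_iff_unique_mem.mpr ⟨ha, huniq⟩
      rw [hFe_eq, Finset.sum_singleton]
      obtain ⟨haF, han⟩ := Finset.mem_filter.mp ha
      push_neg at han
      exact hK₀ L hL a (hFmem a haF).1 han
  calc ∑ γ ∈ F, |D γ| = ∑ γ ∈ Fg, |D γ| + ∑ γ ∈ Fe, |D γ| :=
        (Finset.sum_filter_add_sum_filter_not F _ _).symm
    _ ≤ 1 / V * I + K₀ * I := add_le_add hgood hbad
    _ = (1 / V + K₀) * I := by ring


end
end

section
/- Let 𝔇 ⊂ ℝ² be an r-uniformly discrete set, fix i ∈ {1,2}, and let D : ℝ² → ℝ be a continuous function such that |D(x)| ≥ |D(y)| whenever |x_i| ≤ |y_i|. Then there exists a constant K (depending on r, 𝔇 and D, but independent of L) such that for every L > 2r: ∑_{γ ∈ 𝔇 ∩ Λ_L} |D(γ)| ≤ K ∫_{Λ_L} |D(x)| dx, where Λ_L = [−L,L]². -/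
open MeasureTheory Filter Topology

noncomputable section

private lemma fin2_cover (i j : Fin 2) (hij : j ≠ i) : ∀ k : Fin 2, k = i ∨ k = j := by
  fin_cases i <;> fin_cases j <;> simp_all <;> decide

private lemma fin2_sum (i j : Fin 2) (hij : j ≠ i) (f : Fin 2 → ℝ) :
    f 0 + f 1 = f i + f j := by
  fin_cases i <;> fin_cases j <;> simp_all [add_comm]

private lemma fin2_prod (i j : Fin 2) (hij : j ≠ i) (f : Fin 2 → ENNReal) :
    ∏ k, f k = f i * f j := by
  rw [Fin.prod_univ_two]
  fin_cases i <;> fin_cases j <;> simp_all [mul_comm]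

private lemma fin2_and (i j : Fin 2) (hij : j ≠ i) (P : Fin 2 → Prop) :
    (∀ k, P k) ↔ (P i ∧ P j) := by
  constructor
  · exact fun h => ⟨h i, h j⟩
  · rintro ⟨h1, h2⟩ k
    rcases fin2_cover i j hij k with rfl | rfl
    exacts [h1, h2]

private lemma dist_comp_le (x y : R2) (k : Fin 2) : dist (x k) (y k) ≤ dist x y := by
  rw [EuclideanSpace.dist_eq]
  rw [show dist (x k) (y k) = Real.sqrt (dist (x k) (y k) ^ 2) from
    (Real.sqrt_sq dist_nonneg).symm]
  apply Real.sqrt_le_sqrt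
  exact Finset.single_le_sum (f := fun m => dist (x m) (y m) ^ 2)
    (fun m _ => sq_nonneg _) (Finset.mem_univ k)

private lemma dist_sq (i j : Fin 2) (hij : j ≠ i) (x y : R2) :
    dist x y ^ 2 = dist (x i) (y i) ^ 2 + dist (x j) (y j) ^ 2 := by
  rw [EuclideanSpace.dist_eq, Real.sq_sqrt (by positivity), Fin.sum_univ_two,
    fin2_sum i j hij (fun k => dist (x k) (y k) ^ 2)]

private lemma box_meas (i j : Fin 2) (A B : Set ℝ)
    (hA : MeasurableSet A) (hB : MeasurableSet B) :
    MeasurableSet {x : R2 | x i ∈ A ∧ x j ∈ B} := by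
  have : {x : R2 | x i ∈ A ∧ x j ∈ B}
      = ((fun x : R2 => x i) ⁻¹' A) ∩ ((fun x : R2 => x j) ⁻¹' B) := rfl
  rw [this]
  exact ((hA.preimage (PiLp.continuous_apply 2 _ i).measurable)).inter
    (hB.preimage (PiLp.continuous_apply 2 _ j).measurable)

private lemma box_vol (i j : Fin 2) (hij : j ≠ i) (A B : Set ℝ)
    (hA : MeasurableSet A) (hB : MeasurableSet B) :
    volume {x : R2 | x i ∈ A ∧ x j ∈ B} = volume A * volume B := by
  have hE : {x : R2 | x i ∈ A ∧ x j ∈ B}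
      = (MeasurableEquiv.toLp 2 (Fin 2 → ℝ)).symm ⁻¹'
        (Set.univ.pi fun k => if k = i then A else B) := by
    ext x
    simp only [Set.mem_preimage, Set.mem_pi, Set.mem_univ, forall_true_left, Set.mem_setOf_eq,
      MeasurableEquiv.toLp_symm_apply]
    constructor
    · rintro ⟨h1, h2⟩ k
      rcases fin2_cover i j hij k with rfl | rfl
      · simpa using h1
      · simp only [if_neg hij]
        exact h2
    · intro h
      refine ⟨by simpa using h i, ?_⟩
      have := h j
      rwa [if_neg hij] at this
  rw [hE, (EuclideanSpace.volume_preserving_symm_measurableEquiv_toLp (Fin 2)).measure_preimage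
      ((MeasurableSet.univ_pi fun k => by
        split_ifs <;> assumption)).nullMeasurableSet,
    volume_pi_pi, fin2_prod i j hij]
  simp [if_neg hij]


set_option maxHeartbeats 1000000 in
/-- directional generalized Maclaurin–Cauchy test. For an `r`-uniformly discrete
set `𝔇 ⊆ ℝ²` and a continuous function `D` monotone in the `i`-th coordinate, there is a
constant `K`, independent of `L`, such that for all `L > 2r` the sum of `|D(γ)|` over
`γ ∈ 𝔇 ∩ Λ_L` is bounded by `K ∫_{Λ_L} |D(x)| dx`. -/
theorem statement_6
    (𝔇 : Set R2) (r : ℝ) (h𝔇 : UnifDiscrete 𝔇 r) (i : Fin 2)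
    (D : R2 → ℝ) (hD : Continuous D)
    (hmono : ∀ x y : R2, |x i| ≤ |y i| → |D y| ≤ |D x|) :
    ∃ K : ℝ, 0 < K ∧ ∀ L : ℝ, 2 * r < L →
      ∀ F : Finset R2, (↑F ⊆ 𝔇 ∩ Lam L) →
        ∑ γ ∈ F, |D γ| ≤ K * ∫ x in Lam L, |D x| := by
  classical
  obtain ⟨hr, hdisc⟩ := h𝔇
  have hsep : ∀ γ ∈ 𝔇, ∀ γ' ∈ 𝔇, γ ≠ γ' → r ≤ dist γ γ' := by
    intro γ hγ γ' hγ' hne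
    by_contra hlt
    push_neg at hlt
    exact hne (hdisc γ ⟨hγ, Metric.mem_ball_self hr⟩
      ⟨hγ', Metric.mem_ball.2 (by rwa [dist_comm])⟩)
  obtain ⟨j, hij⟩ : ∃ j : Fin 2, j ≠ i := by
    fin_cases i
    exacts [⟨1, by decide⟩, ⟨0, by decide⟩]
  set t := r / 3 with htdef
  have ht0 : 0 < t := by positivity
  have hDbd : ∀ x : R2, |D x| ≤ |D 0| :=
    fun x => hmono 0 x (by rw [show (0:R2) i = 0 from rfl, abs_zero]; exact abs_nonneg _)
  have hDeq : ∀ x y : R2, |x i| = |y i| → |D x| = |D y| :=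
    fun x y h => le_antisymm (hmono y x h.ge) (hmono x y h.le)
  -- integrability of |D| on finite-measure sets
  have hint : ∀ s : Set R2, volume s ≠ ⊤ → IntegrableOn (fun x => |D x|) s volume := by
    intro s hs
    refine Measure.integrableOn_of_bounded (M := |D 0|) hs (hD.abs.aestronglyMeasurable) ?_
    filter_upwards with x
    rw [Real.norm_eq_abs, abs_abs]
    exact hDbd x
  -- membership in Lam via i/j coordinates
  have hLam : ∀ (x : R2) (L : ℝ), x ∈ Lam L ↔ (|x i| ≤ L ∧ |x j| ≤ L) := by
    intro x L
    rw [Lam, Set.mem_setOf_eq, show (|x 0| ≤ L ∧ |x 1| ≤ L) ↔ ∀ k : Fin 2, |x k| ≤ L from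
      (Fin.forall_fin_two (p := fun k => |x k| ≤ L)).symm, fin2_and i j hij]
  have hLamMeas : ∀ L : ℝ, MeasurableSet (Lam L) := by
    intro L
    have : Lam L = {x : R2 | x i ∈ Set.Icc (-L) L ∧ x j ∈ Set.Icc (-L) L} := by
      ext x
      rw [hLam]
      simp [Set.mem_Icc, abs_le]
    rw [this]
    exact box_meas i j _ _ measurableSet_Icc measurableSet_Icc
  have hLamVol : ∀ L : ℝ, volume (Lam L) ≠ ⊤ := by
    intro L
    have : Lam L = {x : R2 | x i ∈ Set.Icc (-L) L ∧ x j ∈ Set.Icc (-L) L} := by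
      ext x
      rw [hLam]
      simp [Set.mem_Icc, abs_le]
    rw [this, box_vol i j hij _ _ measurableSet_Icc measurableSet_Icc]
    simp [Real.volume_Icc]
    exact ENNReal.mul_ne_top ENNReal.ofReal_ne_top ENNReal.ofReal_ne_top
  
  -- interval gadget
  set I : ℝ → Set ℝ := fun a => if 0 ≤ a then Set.Icc (a - t) a else Set.Icc a (a + t) with hIdef
  have hImeas : ∀ a, MeasurableSet (I a) := by
    intro a; rw [hIdef]; dsimp only; split_ifs <;> exact measurableSet_Icc
  have hIvol : ∀ a, volume (I a) = ENNReal.ofReal t := by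
    intro a; rw [hIdef]; dsimp only; split_ifs <;> simp [Real.volume_Icc]
  have hInear : ∀ a x, x ∈ I a → |x - a| ≤ t := by
    intro a x hx
    rw [hIdef] at hx; dsimp only at hx
    rw [abs_le]
    split_ifs at hx with h <;> rcases hx with ⟨h1, h2⟩ <;> exact ⟨by linarith, by linarith⟩
  have hIabs : ∀ a x, x ∈ I a → |x| ≤ max |a| t := by
    intro a x hx
    rw [hIdef] at hx; dsimp only at hx
    split_ifs at hx with h <;> rcases hx with ⟨h1, h2⟩
    · rw [abs_of_nonneg h]
      rcases abs_cases x with ⟨e, _⟩ | ⟨e, _⟩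
      · rw [e]; exact le_max_of_le_left h2
      · rw [e]; exact le_max_of_le_right (by linarith)
    · push_neg at h
      rw [abs_of_neg h]
      rcases abs_cases x with ⟨e, _⟩ | ⟨e, _⟩
      · rw [e]; exact le_max_of_le_right (by linarith)
      · rw [e]; exact le_max_of_le_left (by linarith)
  have hIabs2 : ∀ a x, x ∈ I a → t ≤ |a| → |x| ≤ |a| :=
    fun a x hx h => (hIabs a x hx).trans_eq (max_eq_left h)
  -- the boxes
  set Q : R2 → Set R2 := fun γ => {x : R2 | x i ∈ I (γ i) ∧ x j ∈ I (γ j)} with hQdef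
  have hQmeas : ∀ γ, MeasurableSet (Q γ) := fun γ => box_meas i j _ _ (hImeas _) (hImeas _)
  have hQvol : ∀ γ, volume (Q γ) = ENNReal.ofReal t * ENNReal.ofReal t := fun γ => by
    rw [hQdef]; dsimp only
    rw [box_vol i j hij _ _ (hImeas _) (hImeas _), hIvol, hIvol]
  have hQvolR : ∀ γ, (volume (Q γ)).toReal = t * t := fun γ => by
    rw [hQvol, ENNReal.toReal_mul, ENNReal.toReal_ofReal ht0.le]
  have hQfin : ∀ γ, volume (Q γ) ≠ ⊤ := fun γ => by
    rw [hQvol]; exact ENNReal.mul_ne_top ENNReal.ofReal_ne_top ENNReal.ofReal_ne_top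
  rcases eq_or_lt_of_le (abs_nonneg (D 0)) with h0 | h0
  · -- degenerate case : D vanishes identically
    refine ⟨1, one_pos, fun L hL F hF => ?_⟩
    have h1 : ∑ γ ∈ F, |D γ| ≤ 0 :=
      Finset.sum_nonpos fun γ _ => (hDbd γ).trans h0.ge
    refine h1.trans ?_
    rw [one_mul]
    exact integral_nonneg fun x => abs_nonneg _
  · -- main case
    set Q0 : Set R2 := {x : R2 | x i ∈ Set.Icc (-t) t ∧ x j ∈ Set.Ioc 0 (2*t)} with hQ0def
    have hQ0meas : MeasurableSet Q0 := box_meas i j _ _ measurableSet_Icc measurableSet_Ioc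
    have hQ0fin : volume Q0 ≠ ⊤ := by
      rw [hQ0def, box_vol i j hij _ _ measurableSet_Icc measurableSet_Ioc]
      exact ENNReal.mul_ne_top (by simp [Real.volume_Icc]) (by rw [Real.volume_Ioc]; exact ENNReal.ofReal_ne_top)
    set c := ∫ x in Q0, |D x| with hcdef
    have hcpos : 0 < c := by
      set p : R2 := EuclideanSpace.single j t with hpdef
      have hpi : p i = 0 := by rw [hpdef, EuclideanSpace.single_apply]; exact if_neg (Ne.symm hij)
      have hpj : p j = t := by rw [hpdef, EuclideanSpace.single_apply]; exact if_pos rfl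
      have hDp : |D p| = |D 0| := hDeq p 0 (by rw [hpi, show (0:R2) i = 0 from rfl])
      have hc1 : ContinuousAt (fun x => |D x|) p := (hD.abs).continuousAt
      obtain ⟨δ, hδ0, hδ⟩ := Metric.continuousAt_iff.1 hc1 (|D 0|/2) (by linarith)
      set ε := min δ t with hεdef
      have hε0 : 0 < ε := lt_min hδ0 ht0
      have hεt : ε ≤ t := min_le_right _ _
      have hball : Metric.ball p ε ⊆ Q0 := by
        intro x hx
        rw [Metric.mem_ball] at hx
        have hxi := (dist_comp_le x p i).trans_lt hx
        have hxj := (dist_comp_le x p j).trans_lt hx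
        rw [Real.dist_eq, hpi, sub_zero] at hxi
        rw [Real.dist_eq, hpj] at hxj
        have h1 := abs_lt.1 hxi
        have h2 := abs_lt.1 hxj
        rw [hQ0def]
        exact ⟨Set.mem_Icc.2 ⟨by linarith, by linarith⟩,
          Set.mem_Ioc.2 ⟨by linarith, by linarith⟩⟩
      have hlow : ∀ x ∈ Metric.ball p ε, |D 0|/2 ≤ |D x| := by
        intro x hx
        have hd' := hδ ((Metric.mem_ball.1 hx).trans_le (min_le_left _ _))
        rw [Real.dist_eq, hDp] at hd'
        have := abs_lt.1 hd'
        linarith [this.1]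
      have hvb : 0 < (volume (Metric.ball p ε)).toReal :=
        ENNReal.toReal_pos (Metric.measure_ball_pos volume p hε0).ne'
          (measure_ball_lt_top).ne
      calc (0:ℝ) < (|D 0|/2) * (volume (Metric.ball p ε)).toReal := by positivity
        _ ≤ ∫ x in Metric.ball p ε, |D x| :=
            setIntegral_ge_of_const_le_real measurableSet_ball
              (measure_ball_lt_top).ne hlow (hint _ (measure_ball_lt_top).ne)
        _ ≤ c := setIntegral_mono_set (hint _ hQ0fin)
            (Filter.Eventually.of_forall fun x => abs_nonneg _)
            (HasSubset.Subset.eventuallyLE hball)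
    refine ⟨1/(t*t) + 6*|D 0|/c + 1, by positivity, fun L hL F hF => ?_⟩
    have htL : 6 * t < L := by rw [htdef]; linarith
    have hInt0 : 0 ≤ ∫ x in Lam L, |D x| := integral_nonneg fun x => abs_nonneg _
    have hFD : ∀ γ ∈ F, γ ∈ 𝔇 := fun γ h => (hF (Finset.mem_coe.2 h)).1
    have hFL : ∀ γ ∈ F, γ ∈ Lam L := fun γ h => (hF (Finset.mem_coe.2 h)).2
    set Fg := F.filter (fun γ => t ≤ |γ i|) with hFgdef
    set Fb := F.filter (fun γ => ¬ t ≤ |γ i|) with hFbdef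
    -- GOOD PART
    have hgood : ∑ γ ∈ Fg, |D γ| ≤ (1/(t*t)) * ∫ x in Lam L, |D x| := by
      have hsub : ∀ γ ∈ Fg, Q γ ⊆ Lam L := by
        intro γ hγ x hx
        rw [hFgdef, Finset.mem_filter] at hγ
        obtain ⟨hγF, hγt⟩ := hγ
        obtain ⟨hxi, hxj⟩ := hx
        rw [hLam]
        have hγL := (hLam γ L).1 (hFL γ hγF)
        exact ⟨(hIabs2 _ _ hxi hγt).trans hγL.1,
          (hIabs _ _ hxj).trans (max_le hγL.2 (by linarith))⟩
      have hdisj : (↑Fg : Set R2).Pairwise (Function.onFun Disjoint Q) := by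
        intro γ hγ γ' hγ' hne
        rw [Function.onFun, Set.disjoint_left]
        intro x hx hx'
        obtain ⟨hxi, hxj⟩ := hx
        obtain ⟨hxi', hxj'⟩ := hx'
        have hγ𝔇 := hFD γ (Finset.mem_filter.1 (Finset.mem_coe.1 hγ)).1
        have hγ𝔇' := hFD γ' (Finset.mem_filter.1 (Finset.mem_coe.1 hγ')).1
        have hd := hsep γ hγ𝔇 γ' hγ𝔇' hne
        have h1 : |γ i - γ' i| ≤ 2*t := by
          have := abs_sub_le (γ i) (x i) (γ' i)
          have e1 := hInear _ _ hxi
          have e2 := hInear _ _ hxi'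
          rw [abs_sub_comm (x i) (γ i)] at e1
          linarith
        have h2 : |γ j - γ' j| ≤ 2*t := by
          have := abs_sub_le (γ j) (x j) (γ' j)
          have e1 := hInear _ _ hxj
          have e2 := hInear _ _ hxj'
          rw [abs_sub_comm (x j) (γ j)] at e1
          linarith
        have hsq := dist_sq i j hij γ γ'
        rw [Real.dist_eq, Real.dist_eq] at hsq
        have hd2 : r^2 ≤ dist γ γ' ^ 2 := by
          apply pow_le_pow_left₀ hr.le hd
        nlinarith [abs_nonneg (γ i - γ' i), abs_nonneg (γ j - γ' j),
          sq_abs (γ i - γ' i), sq_abs (γ j - γ' j)]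
      have hkey : (t*t) * ∑ γ ∈ Fg, |D γ| ≤ ∫ x in Lam L, |D x| := by
        rw [Finset.mul_sum]
        calc ∑ γ ∈ Fg, (t*t) * |D γ| ≤ ∑ γ ∈ Fg, ∫ x in Q γ, |D x| := by
              refine Finset.sum_le_sum fun γ hγ => ?_
              rw [hFgdef, Finset.mem_filter] at hγ
              have h := setIntegral_ge_of_const_le_real (μ := volume) (c := |D γ|)
                (hQmeas γ) (hQfin γ)
                (fun x hx => hmono x γ (hIabs2 _ _ hx.1 hγ.2))
                (hint _ (hQfin γ))
              rw [measureReal_def, hQvolR] at h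
              linarith [h, mul_comm (t*t) (|D γ|)]
          _ = ∫ x in ⋃ γ ∈ Fg, Q γ, |D x| :=
              (integral_biUnion_finset Fg (fun γ _ => hQmeas γ) hdisj
                (fun γ _ => hint _ (hQfin γ))).symm
          _ ≤ ∫ x in Lam L, |D x| :=
              setIntegral_mono_set (hint _ (hLamVol L))
                (Filter.Eventually.of_forall fun x => abs_nonneg _)
                (HasSubset.Subset.eventuallyLE (Set.iUnion₂_subset hsub))
      rw [one_div, ← div_eq_inv_mul]
      rw [le_div_iff₀ (by positivity)]
      linarith [hkey, mul_comm (∑ γ ∈ Fg, |D γ|) (t*t)]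
    -- BAD PART : counting
    have hbadsep : ∀ γ ∈ Fb, ∀ γ' ∈ Fb, γ ≠ γ' → 2*t < |γ j - γ' j| := by
      intro γ hγ γ' hγ' hne
      rw [hFbdef, Finset.mem_filter] at hγ hγ'
      have hγi : |γ i| < t := not_le.1 hγ.2
      have hγi' : |γ' i| < t := not_le.1 hγ'.2
      have hd := hsep γ (hFD γ hγ.1) γ' (hFD γ' hγ'.1) hne
      have hsq := dist_sq i j hij γ γ'
      rw [Real.dist_eq, Real.dist_eq] at hsq
      have hd2 : r^2 ≤ dist γ γ' ^ 2 := pow_le_pow_left₀ hr.le hd 2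
      have hdi : |γ i - γ' i| < 2*t := by
        have := abs_sub (γ i) (γ' i)
        linarith
      nlinarith [abs_nonneg (γ i - γ' i), abs_nonneg (γ j - γ' j),
        sq_abs (γ i - γ' i), sq_abs (γ j - γ' j)]
    have hcard : (Fb.card : ℝ) ≤ 2 * L / t := by
      have h2t : (0:ℝ) < 2*t := by linarith
      have hmem : ∀ γ ∈ Fb, (fun γ : R2 => ⌊(γ j + L)/(2*t)⌋₊) γ ∈ Finset.range (⌊L/t⌋₊ + 1) := by
        intro γ hγ
        rw [Finset.mem_range, Nat.lt_succ_iff]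
        apply Nat.floor_le_floor
        have hγL := ((hLam γ L).1 (hFL γ (Finset.mem_filter.1 hγ).1)).2
        have := abs_le.1 hγL
        rw [div_le_div_iff₀ h2t (by linarith : (0:ℝ) < t)]
        nlinarith [this.2]
      have hinj : Set.InjOn (fun γ : R2 => ⌊(γ j + L)/(2*t)⌋₊) ↑Fb := by
        intro γ hγ γ' hγ' heq
        by_contra hne
        have hs := hbadsep γ (Finset.mem_coe.1 hγ) γ' (Finset.mem_coe.1 hγ') hne
        have hγL := abs_le.1 ((hLam γ L).1 (hFL γ (Finset.mem_filter.1 (Finset.mem_coe.1 hγ)).1)).2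
        have hγL' := abs_le.1 ((hLam γ' L).1 (hFL γ' (Finset.mem_filter.1 (Finset.mem_coe.1 hγ')).1)).2
        have hu0 : (0:ℝ) ≤ (γ j + L)/(2*t) := div_nonneg (by linarith [hγL.1]) h2t.le
        have hu0' : (0:ℝ) ≤ (γ' j + L)/(2*t) := div_nonneg (by linarith [hγL'.1]) h2t.le
        have ha1 : (⌊(γ j + L)/(2*t)⌋₊ : ℝ) ≤ (γ j + L)/(2*t) := Nat.floor_le hu0
        have ha2 : (γ j + L)/(2*t) < ⌊(γ j + L)/(2*t)⌋₊ + 1 := Nat.lt_floor_add_one _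
        have hb1 : (⌊(γ' j + L)/(2*t)⌋₊ : ℝ) ≤ (γ' j + L)/(2*t) := Nat.floor_le hu0'
        have hb2 : (γ' j + L)/(2*t) < ⌊(γ' j + L)/(2*t)⌋₊ + 1 := Nat.lt_floor_add_one _
        simp only at heq
        rw [heq] at ha1 ha2
        have hq1 := (div_lt_iff₀ h2t).1 ha2
        have hq2 := (div_lt_iff₀ h2t).1 hb2
        have hq3 := (le_div_iff₀ h2t).1 ha1
        have hq4 := (le_div_iff₀ h2t).1 hb1
        have habs : |γ j - γ' j| < 2*t := by
          rw [abs_lt]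
          constructor <;> nlinarith
        linarith [habs, hs]
      have hcard1 := Finset.card_le_card_of_injOn _ hmem hinj
      have hcard2 : (Fb.card : ℝ) ≤ (⌊L/t⌋₊ : ℝ) + 1 := by
        rw [Finset.card_range] at hcard1
        exact_mod_cast hcard1
      have hfl : (⌊L/t⌋₊ : ℝ) ≤ L/t := Nat.floor_le (div_nonneg (by linarith) ht0.le)
      have h1Lt : (1:ℝ) ≤ L/t := by
        rw [le_div_iff₀ ht0]; linarith
      calc (Fb.card : ℝ) ≤ L/t + 1 := by linarith
        _ ≤ L/t + L/t := by linarith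
        _ = 2*L/t := by ring
    have hbadsum : ∑ γ ∈ Fb, |D γ| ≤ (Fb.card : ℝ) * |D 0| := by
      calc ∑ γ ∈ Fb, |D γ| ≤ ∑ _γ ∈ Fb, |D 0| := Finset.sum_le_sum fun γ _ => hDbd γ
        _ = Fb.card * |D 0| := by rw [Finset.sum_const, nsmul_eq_mul]
    -- TILING : lower bound for the integral
    have htile : (L/(3*t)) * c ≤ ∫ x in Lam L, |D x| := by
      set N := ⌊L/(2*t)⌋₊ with hNdef
      set T : ℕ → Set R2 := fun k =>
        {x : R2 | x i ∈ Set.Icc (-t) t ∧ x j ∈ Set.Ioc (2*t*k) (2*t*k + 2*t)} with hTdef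
      have hTmeas : ∀ k, MeasurableSet (T k) :=
        fun k => box_meas i j _ _ measurableSet_Icc measurableSet_Ioc
      have hTfin : ∀ k : ℕ, volume (T k) ≠ ⊤ := by
        intro k
        rw [hTdef]; dsimp only
        rw [box_vol i j hij _ _ measurableSet_Icc measurableSet_Ioc]
        exact ENNReal.mul_ne_top (by simp [Real.volume_Icc]) (by rw [Real.volume_Ioc]; exact ENNReal.ofReal_ne_top)
      have hTval : ∀ k : ℕ, ∫ x in T k, |D x| = c := by
        intro k
        set v : R2 := EuclideanSpace.single j (-(2*t*k)) with hvdef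
        have hvi : v i = 0 := by rw [hvdef, EuclideanSpace.single_apply]; exact if_neg (Ne.symm hij)
        have hvj : v j = -(2*t*k) := by rw [hvdef, EuclideanSpace.single_apply]; exact if_pos rfl
        have hpre : (fun x : R2 => x + v) ⁻¹' Q0 = T k := by
          ext x
          rw [hQ0def, hTdef]
          simp only [Set.mem_preimage, Set.mem_setOf_eq, Set.mem_Icc, Set.mem_Ioc,
            show (x + v) i = x i + v i from rfl, show (x + v) j = x j + v j from rfl,
            hvi, hvj, add_zero]
          constructor
          · rintro ⟨ha, hb⟩
            exact ⟨ha, by constructor <;> linarith [hb.1, hb.2]⟩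
          · rintro ⟨ha, hb⟩
            exact ⟨ha, by constructor <;> linarith [hb.1, hb.2]⟩
        have hemb : MeasurableEmbedding (fun x : R2 => x + v) := by
          have h := (MeasurableEquiv.addRight v).measurableEmbedding
          rwa [MeasurableEquiv.coe_addRight] at h
        have heq : ∫ x in T k, |D (x + v)| = c := by
          rw [hcdef, ← hpre]
          exact (measurePreserving_add_right volume v).setIntegral_preimage_emb hemb
            (fun y => |D y|) Q0
        have hptw : ∀ x : R2, |D x| = |D (x + v)| := fun x =>
          hDeq _ _ (by rw [show (x + v) i = x i + v i from rfl, hvi, add_zero])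
        rw [show (∫ x in T k, |D x|) = ∫ x in T k, |D (x + v)| from
          integral_congr_ae (Filter.Eventually.of_forall fun x => hptw x), heq]
      have hNle : (N:ℝ) * (2*t) ≤ L := by
        have h := Nat.floor_le (show (0:ℝ) ≤ L/(2*t) from div_nonneg (by linarith) (by linarith))
        rw [← hNdef] at h
        exact (le_div_iff₀ (by positivity)).1 h
      have hTsub : ∀ k ∈ Finset.range N, T k ⊆ Lam L := by
        intro k hk x hx
        obtain ⟨hxi, hxj⟩ := hx
        rw [Set.mem_Icc] at hxi
        rw [Set.mem_Ioc] at hxj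
        rw [hLam]
        have hkN : (k:ℝ) + 1 ≤ N := by exact_mod_cast Nat.succ_le_of_lt (Finset.mem_range.1 hk)
        have hk0 : (0:ℝ) ≤ 2*t*k := by positivity
        constructor
        · rw [abs_le]; exact ⟨by linarith [hxi.1], by linarith [hxi.2]⟩
        · rw [abs_le]
          constructor
          · linarith [hxj.1]
          · nlinarith [hxj.2, hkN, hNle]
      have hTdisj : (↑(Finset.range N) : Set ℕ).Pairwise (Function.onFun Disjoint T) := by
        intro k _ k' _ hne
        rw [Function.onFun, Set.disjoint_left]
        intro x hx hx'
        obtain ⟨_, hxj⟩ := hx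
        obtain ⟨_, hxj'⟩ := hx'
        rw [Set.mem_Ioc] at hxj hxj'
        rcases Nat.lt_or_ge k k' with h | h
        · have hc : (k:ℝ) + 1 ≤ (k':ℝ) := by exact_mod_cast h
          nlinarith [hxj.2, hxj'.1]
        · have h' : k' < k := lt_of_le_of_ne h (Ne.symm hne)
          have hc : (k':ℝ) + 1 ≤ (k:ℝ) := by exact_mod_cast h'
          nlinarith [hxj'.2, hxj.1]
      have hNc : (N:ℝ) * c ≤ ∫ x in Lam L, |D x| := by
        calc (N:ℝ) * c = ∑ _k ∈ Finset.range N, c := by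
              rw [Finset.sum_const, Finset.card_range, nsmul_eq_mul]
          _ = ∑ k ∈ Finset.range N, ∫ x in T k, |D x| :=
              (Finset.sum_congr rfl fun k _ => (hTval k).symm)
          _ = ∫ x in ⋃ k ∈ Finset.range N, T k, |D x| :=
              (integral_biUnion_finset (Finset.range N) (fun k _ => hTmeas k) hTdisj
                (fun k _ => hint _ (hTfin k))).symm
          _ ≤ ∫ x in Lam L, |D x| :=
              setIntegral_mono_set (hint _ (hLamVol L))
                (Filter.Eventually.of_forall fun x => abs_nonneg _)
                (HasSubset.Subset.eventuallyLE (Set.iUnion₂_subset hTsub))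
      have hNge : L/(3*t) ≤ (N:ℝ) := by
        have h1 : L/(2*t) < (N:ℝ) + 1 := by
          rw [hNdef]; exact Nat.lt_floor_add_one _
        have h2 : (1:ℝ) < L/(6*t) := (one_lt_div (by positivity)).2 (by linarith)
        have h3 : L/(2*t) = L/(3*t) + L/(6*t) := by
          field_simp
          ring
        linarith
      calc L/(3*t) * c ≤ (N:ℝ) * c := mul_le_mul_of_nonneg_right hNge hcpos.le
        _ ≤ _ := hNc
    -- combine
    have hbad2 : ∑ γ ∈ Fb, |D γ| ≤ (6*|D 0|/c) * ∫ x in Lam L, |D x| := by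
      calc ∑ γ ∈ Fb, |D γ| ≤ (Fb.card : ℝ) * |D 0| := hbadsum
        _ ≤ (2*L/t) * |D 0| := mul_le_mul_of_nonneg_right hcard (abs_nonneg _)
        _ = (6*|D 0|/c) * (L/(3*t) * c) := by
            field_simp
            ring
        _ ≤ (6*|D 0|/c) * ∫ x in Lam L, |D x| :=
            mul_le_mul_of_nonneg_left htile (by positivity)
    have hsplit : ∑ γ ∈ F, |D γ| = ∑ γ ∈ Fg, |D γ| + ∑ γ ∈ Fb, |D γ| := by
      rw [hFgdef, hFbdef]
      exact (Finset.sum_filter_add_sum_filter_not F _ _).symm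
    rw [hsplit]
    have hfin := add_le_add hgood hbad2
    nlinarith [hInt0, hfin]


end
end
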